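/- With G₃, G₃[3] and G' as defined, the subgroup of G' generated by G₃[3] together with the matrix −1 has index 243 in G' (this is the covering degree of X(G₃[3]) → X(G')). -/

import Mathlib

open Matrix

/-- The primitive cube root of unity `ω = e^{2πi/3}`. -/
noncomputable def ω : ℂ := Complex.exp (2 * Real.pi * Complex.I / 3)

/-- `z ∈ 𝓔 = ℤ[ω]`, the ring of Eisenstein integers. -/
def IsEisenstein (z : ℂ) : Prop := ∃ a b : ℤ, z = (a : ℂ) + (b : ℂ) * ω

/-- The Gram matrix `J` of the hermitian form
`⟨a,b⟩ = ā₁b₂ + ā₂b₁ − ā₃b₃ − ā₄b₄` on `ℂ⁴`. -/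
def J4 : Matrix (Fin 4) (Fin 4) ℂ :=
  !![0, 1, 0, 0; 1, 0, 0, 0; 0, 0, -1, 0; 0, 0, 0, -1]

/-- The six vectors (each of norm `⟨b,b⟩ = −1`) along which the distinguished
triflections are taken. -/
def triVecs : Set (Fin 4 → ℂ) :=
  {![0, 0, 1, 0], ![0, 0, 0, 1], ![0, 1, 1, 0], ![0, 1, -1, 0], ![0, 1, 0, 1],
    ![0, 1, 0, -1]}

/-- The matrix of the triflection `a ↦ a − (1−ω)·(⟨b,a⟩/⟨b,b⟩)·b` along a vector `b`
with `⟨b,b⟩ = −1`; here `⟨b,a⟩ = (star b) ⬝ᵥ (J *ᵥ a)`, so the matrix is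
`1 + (1−ω)·b·((star b)ᵀ J)`. -/
noncomputable def triflectionMatrix (b : Fin 4 → ℂ) : Matrix (Fin 4) (Fin 4) ℂ :=
  1 + (1 - ω) • Matrix.vecMulVec b (Matrix.vecMul (star b) J4)

/-- The six distinguished triflections, as elements of `GL₄(ℂ)`. -/
noncomputable def triflections : Set (GL (Fin 4) ℂ) :=
  {x | ∃ b ∈ triVecs, (x : Matrix (Fin 4) (Fin 4) ℂ) = triflectionMatrix b}

lemma omega_pow_three : ω ^ 3 = 1 := by
  rw [ω, ← Complex.exp_nat_mul]
  have : (3:ℕ) * (2 * Real.pi * Complex.I / 3) = 2 * Real.pi * Complex.I := by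
    push_cast; ring
  rw [this]
  simpa using Complex.exp_int_mul_two_pi_mul_I 1

lemma omega_ne_one : ω ≠ 1 := by
  unfold ω
  intro h
  rw [Complex.exp_eq_one_iff] at h
  obtain ⟨n, hn⟩ := h
  have hpi : (Real.pi : ℂ) ≠ 0 := by simpa using Real.pi_ne_zero
  have hI : (Complex.I : ℂ) ≠ 0 := Complex.I_ne_zero
  have h2 : (2 * (Real.pi:ℂ) * Complex.I) ≠ 0 := by simp [hpi, hI]
  have hmain : (2 * (Real.pi:ℂ) * Complex.I) * 1 = (2 * Real.pi * Complex.I) * ((3:ℤ)*n : ℤ) := by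
    push_cast
    linear_combination 3 * hn
  have h3 : (1 : ℂ) = ((3*n : ℤ) : ℂ) := mul_left_cancel₀ h2 hmain
  have : (1 : ℤ) = 3 * n := by exact_mod_cast h3
  omega

lemma omega_sq : ω ^ 2 = -1 - ω := by
  have h3 := omega_pow_three
  have h1 : ω - 1 ≠ 0 := sub_ne_zero.2 omega_ne_one
  have key : (ω - 1) * (ω ^ 2 + ω + 1) = 0 := by linear_combination h3
  rcases mul_eq_zero.1 key with h | h
  · exact absurd h h1
  · linear_combination h

lemma omega_im_ne : ω.im ≠ 0 := by
  have heq : (2 * Real.pi * Complex.I / 3) = ((2 * Real.pi / 3 : ℝ) : ℂ) * Complex.I := by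
    push_cast; ring
  have : ω.im = Real.sin (2 * Real.pi / 3) := by
    rw [ω, heq, Complex.exp_ofReal_mul_I_im]
  rw [this]
  have h1 : 0 < 2 * Real.pi / 3 := by positivity
  have h2 : 2 * Real.pi / 3 < Real.pi := by nlinarith [Real.pi_pos]
  exact ne_of_gt (Real.sin_pos_of_pos_of_lt_pi h1 h2)

lemma omega_star : (starRingEnd ℂ) ω = -1 - ω := by
  have h := Complex.exp_conj (2 * Real.pi * Complex.I / 3)
  have hc : (starRingEnd ℂ) (2 * Real.pi * Complex.I / 3) = -(2 * Real.pi * Complex.I / 3) := by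
    simp only [map_div₀, _root_.map_mul, Complex.conj_I, Complex.conj_ofReal, map_ofNat]
    ring
  have hinv : (starRingEnd ℂ) ω * ω = 1 := by
    rw [ω, ← h, hc, ← Complex.exp_add]
    simp
  have : (starRingEnd ℂ) ω = ω ^ 2 := by
    have hω : ω ≠ 0 := by
      intro h0
      have := omega_pow_three
      rw [h0] at this; simp at this
    field_simp [hω] at hinv ⊢
    calc (starRingEnd ℂ) ω = (starRingEnd ℂ) ω * ω * ω ^ 2 / ω ^ 3 := by
          field_simp [hω]
      _ = ω ^ 2 := by rw [hinv, omega_pow_three]; simp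
  rw [this, omega_sq]

-- uniqueness
lemma eis_unique {a b c d : ℤ} (h : (a:ℂ) + (b:ℂ) * ω = (c:ℂ) + (d:ℂ) * ω) :
    a = c ∧ b = d := by
  have him : ((a:ℂ) + (b:ℂ) * ω).im = ((c:ℂ) + (d:ℂ) * ω).im := by rw [h]
  simp [Complex.add_im, Complex.mul_im, Complex.intCast_im, Complex.intCast_re] at him
  have hbd : (b : ℝ) = d := by
    rcases him with h' | h'
    · exact_mod_cast h'
    · exact absurd h' omega_im_ne
  have hb : b = d := by exact_mod_cast hbd
  subst hb
  have := h
  have hre : (a:ℂ) = (c:ℂ) := by linear_combination h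
  exact ⟨by exact_mod_cast hre, rfl⟩

namespace EisRed

open Classical in
/-- chosen integer coordinates of an Eisenstein integer -/
noncomputable def coords (z : ℂ) : ℤ × ℤ :=
  if h : IsEisenstein z then (h.choose, h.choose_spec.choose) else 0

lemma coords_spec {z : ℂ} (h : IsEisenstein z) :
    z = ((coords z).1 : ℂ) + ((coords z).2 : ℂ) * ω := by
  classical
  rw [coords]
  rw [dif_pos h]
  exact h.choose_spec.choose_spec

lemma coords_eval (a b : ℤ) : coords ((a:ℂ) + (b:ℂ) * ω) = (a, b) := by
  have h : IsEisenstein ((a:ℂ) + (b:ℂ) * ω) := ⟨a, b, rfl⟩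
  have := coords_spec h
  obtain ⟨h1, h2⟩ := eis_unique this.symm
  rw [Prod.ext_iff]
  exact ⟨h1, h2⟩

/-- first reduction coordinate: `a + b mod 3` for `z = a + bω`. -/
noncomputable def e1 (z : ℂ) : ZMod 3 := (((coords z).1 + (coords z).2 : ℤ) : ZMod 3)
/-- second reduction coordinate: `b mod 3`. -/
noncomputable def e2 (z : ℂ) : ZMod 3 := (((coords z).2 : ℤ) : ZMod 3)

lemma e1_eval (a b : ℤ) : e1 ((a:ℂ) + (b:ℂ) * ω) = ((a : ZMod 3) + b) := by
  rw [e1, coords_eval]; push_cast; ring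
lemma e2_eval (a b : ℤ) : e2 ((a:ℂ) + (b:ℂ) * ω) = (b : ZMod 3) := by
  rw [e2, coords_eval]

lemma e1_zero : e1 0 = 0 := by simpa using e1_eval 0 0
lemma e2_zero : e2 0 = 0 := by simpa using e2_eval 0 0
lemma e1_one : e1 1 = 1 := by simpa using e1_eval 1 0
lemma e2_one : e2 1 = 0 := by simpa using e2_eval 1 0

lemma e1_add {x y : ℂ} (hx : IsEisenstein x) (hy : IsEisenstein y) :
    e1 (x + y) = e1 x + e1 y := by
  obtain ⟨a, b, rfl⟩ := hx
  obtain ⟨c, d, rfl⟩ := hy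
  have : (a:ℂ) + (b:ℂ)*ω + ((c:ℂ) + (d:ℂ)*ω) = ((a+c : ℤ):ℂ) + ((b+d : ℤ):ℂ)*ω := by
    push_cast; ring
  rw [this, e1_eval, e1_eval, e1_eval]; push_cast; ring

lemma e2_add {x y : ℂ} (hx : IsEisenstein x) (hy : IsEisenstein y) :
    e2 (x + y) = e2 x + e2 y := by
  obtain ⟨a, b, rfl⟩ := hx
  obtain ⟨c, d, rfl⟩ := hy
  have : (a:ℂ) + (b:ℂ)*ω + ((c:ℂ) + (d:ℂ)*ω) = ((a+c : ℤ):ℂ) + ((b+d : ℤ):ℂ)*ω := by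
    push_cast; ring
  rw [this, e2_eval, e2_eval, e2_eval]; push_cast; ring

lemma e1_mul {x y : ℂ} (hx : IsEisenstein x) (hy : IsEisenstein y) :
    e1 (x * y) = e1 x * e1 y := by
  obtain ⟨a, b, rfl⟩ := hx
  obtain ⟨c, d, rfl⟩ := hy
  have : ((a:ℂ) + (b:ℂ)*ω) * ((c:ℂ) + (d:ℂ)*ω)
      = ((a*c - b*d : ℤ):ℂ) + ((a*d + b*c - b*d : ℤ):ℂ)*ω := by
    push_cast
    linear_combination (b:ℂ) * (d:ℂ) * omega_sq
  rw [this, e1_eval, e1_eval, e1_eval]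
  push_cast
  have h3 : (3 : ZMod 3) = 0 := by decide
  linear_combination (-((b:ZMod 3) * (d:ZMod 3))) * h3

lemma e2_mul {x y : ℂ} (hx : IsEisenstein x) (hy : IsEisenstein y) :
    e2 (x * y) = e1 x * e2 y + e2 x * e1 y := by
  obtain ⟨a, b, rfl⟩ := hx
  obtain ⟨c, d, rfl⟩ := hy
  have : ((a:ℂ) + (b:ℂ)*ω) * ((c:ℂ) + (d:ℂ)*ω)
      = ((a*c - b*d : ℤ):ℂ) + ((a*d + b*c - b*d : ℤ):ℂ)*ω := by
    push_cast
    linear_combination (b:ℂ) * (d:ℂ) * omega_sq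
  rw [this, e2_eval, e1_eval, e2_eval, e2_eval, e1_eval]
  push_cast
  have h3 : (3 : ZMod 3) = 0 := by decide
  linear_combination (-((b:ZMod 3) * (d:ZMod 3))) * h3

lemma e1_neg {x : ℂ} (hx : IsEisenstein x) : e1 (-x) = -e1 x := by
  obtain ⟨a, b, rfl⟩ := hx
  have : -((a:ℂ) + (b:ℂ)*ω) = ((-a : ℤ):ℂ) + ((-b : ℤ):ℂ)*ω := by push_cast; ring
  rw [this, e1_eval, e1_eval]; push_cast; ring

lemma e2_neg {x : ℂ} (hx : IsEisenstein x) : e2 (-x) = -e2 x := by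
  obtain ⟨a, b, rfl⟩ := hx
  have : -((a:ℂ) + (b:ℂ)*ω) = ((-a : ℤ):ℂ) + ((-b : ℤ):ℂ)*ω := by push_cast; ring
  rw [this, e2_eval, e2_eval]; push_cast; ring

lemma mem_three {z : ℂ} (hz : IsEisenstein z) (h1 : e1 z = 0) (h2 : e2 z = 0) :
    ∃ a b : ℤ, z = 3 * ((a:ℂ) + (b:ℂ) * ω) := by
  obtain ⟨a, b, rfl⟩ := hz
  rw [e1_eval] at h1
  rw [e2_eval] at h2
  have hb : (3:ℤ) ∣ b := by
    rwa [ZMod.intCast_zmod_eq_zero_iff_dvd] at h2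
  have ha : (3:ℤ) ∣ a := by
    have : ((a : ZMod 3)) = 0 := by
      have hb0 : (b : ZMod 3) = 0 := h2
      rw [hb0] at h1; simpa using h1
    rwa [ZMod.intCast_zmod_eq_zero_iff_dvd] at this
  obtain ⟨a', rfl⟩ := ha
  obtain ⟨b', rfl⟩ := hb
  exact ⟨a', b', by push_cast; ring⟩

end EisRed

-- Eisenstein closure lemmas
lemma IsEisenstein.zero : IsEisenstein 0 := ⟨0, 0, by simp⟩
lemma IsEisenstein.one : IsEisenstein 1 := ⟨1, 0, by simp⟩
lemma IsEisenstein.omega : IsEisenstein ω := ⟨0, 1, by simp⟩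
lemma IsEisenstein.intCast (n : ℤ) : IsEisenstein (n : ℂ) := ⟨n, 0, by simp⟩
lemma IsEisenstein.add {x y : ℂ} (hx : IsEisenstein x) (hy : IsEisenstein y) :
    IsEisenstein (x + y) := by
  obtain ⟨a, b, rfl⟩ := hx; obtain ⟨c, d, rfl⟩ := hy
  exact ⟨a + c, b + d, by push_cast; ring⟩
lemma IsEisenstein.neg {x : ℂ} (hx : IsEisenstein x) : IsEisenstein (-x) := by
  obtain ⟨a, b, rfl⟩ := hx
  exact ⟨-a, -b, by push_cast; ring⟩
lemma IsEisenstein.sub {x y : ℂ} (hx : IsEisenstein x) (hy : IsEisenstein y) :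
    IsEisenstein (x - y) := by
  rw [sub_eq_add_neg]; exact hx.add hy.neg
lemma IsEisenstein.mul {x y : ℂ} (hx : IsEisenstein x) (hy : IsEisenstein y) :
    IsEisenstein (x * y) := by
  obtain ⟨a, b, rfl⟩ := hx; obtain ⟨c, d, rfl⟩ := hy
  exact ⟨a*c - b*d, a*d + b*c - b*d, by push_cast; linear_combination (b:ℂ)*(d:ℂ)*omega_sq⟩
lemma isEisenstein_star {x : ℂ} (hx : IsEisenstein x) : IsEisenstein (star x) := by
  obtain ⟨a, b, rfl⟩ := hx
  refine ⟨a - b, -b, ?_⟩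
  have : (star ((a:ℂ) + (b:ℂ)*ω) : ℂ) = (a:ℂ) + (b:ℂ) * ((starRingEnd ℂ) ω) := by
    simp only [Complex.star_def, map_add, _root_.map_mul, map_intCast]
  rw [this, omega_star]; push_cast; ring

----------------------------------------------------------------
-- PART C
----------------------------------------------------------------
open EisRed

abbrev M4C := Matrix (Fin 4) (Fin 4) ℂ
abbrev M43 := Matrix (Fin 4) (Fin 4) (ZMod 3)

/-- All entries are Eisenstein integers. -/
def IsEisM (M : M4C) : Prop := ∀ i j, IsEisenstein (M i j)

lemma isE_sum {f : Fin 4 → ℂ} (hf : ∀ k, IsEisenstein (f k)) :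
    IsEisenstein (∑ k, f k) := by
  rw [Fin.sum_univ_four]
  exact (((hf 0).add (hf 1)).add (hf 2)).add (hf 3)

lemma IsEisM.mul {A B : M4C} (hA : IsEisM A) (hB : IsEisM B) : IsEisM (A * B) := by
  intro i j
  rw [Matrix.mul_apply]
  exact isE_sum fun k => (hA i k).mul (hB k j)

lemma isE_J : IsEisM J4 := by
  intro i j
  fin_cases i <;> fin_cases j <;> simp [J4] <;>
    first
      | exact IsEisenstein.zero
      | exact IsEisenstein.one
      | exact IsEisenstein.one.neg

lemma IsEisM.one : IsEisM 1 := by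
  intro i j
  by_cases h : i = j
  · subst h; simpa [Matrix.one_apply] using IsEisenstein.one
  · simpa [Matrix.one_apply, h] using IsEisenstein.zero

lemma IsEisM.conjTranspose {A : M4C} (hA : IsEisM A) : IsEisM Aᴴ := by
  intro i j
  exact isEisenstein_star (hA j i)

lemma JJ : J4 * J4 = 1 := by
  ext i j
  fin_cases i <;> fin_cases j <;>
    simp [J4, Matrix.mul_apply, Fin.sum_univ_four, Matrix.one_apply, Matrix.vecHead,
      Matrix.vecTail]

/-- The Picard modular group `G₃` as a subgroup of `GL₄(ℂ)`. -/
def G3gp : Subgroup (GL (Fin 4) ℂ) where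
  carrier := {γ | IsEisM (γ : M4C) ∧ (γ : M4C)ᴴ * J4 * (γ : M4C) = J4}
  one_mem' := by
    constructor
    · simpa using IsEisM.one
    · simp
  mul_mem' := by
    rintro a b ⟨ha1, ha2⟩ ⟨hb1, hb2⟩
    constructor
    · have := ha1.mul hb1
      rwa [← Units.val_mul] at this
    · show ((a * b : GL (Fin 4) ℂ) : M4C)ᴴ * J4 * ((a * b : GL (Fin 4) ℂ) : M4C) = J4
      rw [Units.val_mul, Matrix.conjTranspose_mul]
      calc (b:M4C)ᴴ * (a:M4C)ᴴ * J4 * ((a:M4C) * (b:M4C))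
          = (b:M4C)ᴴ * ((a:M4C)ᴴ * J4 * (a:M4C)) * (b:M4C) := by
            simp only [Matrix.mul_assoc]
        _ = J4 := by rw [ha2]; exact hb2
  inv_mem' := by
    rintro γ ⟨h1, h2⟩
    have hval : ((γ⁻¹ : GL (Fin 4) ℂ) : M4C) = (γ : M4C)⁻¹ := by
      simp [Matrix.coe_units_inv]
    have hleft : (J4 * (γ : M4C)ᴴ * J4) * (γ : M4C) = 1 := by
      calc (J4 * (γ : M4C)ᴴ * J4) * (γ : M4C) = J4 * ((γ : M4C)ᴴ * J4 * (γ : M4C)) := by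
            simp only [Matrix.mul_assoc]
        _ = J4 * J4 := by rw [h2]
        _ = 1 := JJ
    have hInv : (γ : M4C)⁻¹ = J4 * (γ : M4C)ᴴ * J4 := Matrix.inv_eq_left_inv hleft
    constructor
    · show IsEisM ((γ⁻¹ : GL (Fin 4) ℂ) : M4C)
      rw [hval, hInv]
      exact (isE_J.mul h1.conjTranspose).mul isE_J
    · show ((γ⁻¹ : GL (Fin 4) ℂ) : M4C)ᴴ * J4 * ((γ⁻¹ : GL (Fin 4) ℂ) : M4C) = J4
      rw [hval]
      have hright : (γ : M4C) * (γ : M4C)⁻¹ = 1 := by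
        rw [← hval]
        exact γ.mul_inv
      calc ((γ:M4C)⁻¹)ᴴ * J4 * (γ:M4C)⁻¹
          = ((γ:M4C)⁻¹)ᴴ * ((γ:M4C)ᴴ * J4 * (γ:M4C)) * (γ:M4C)⁻¹ := by rw [h2]
        _ = ((γ:M4C) * (γ:M4C)⁻¹)ᴴ * J4 * ((γ:M4C) * (γ:M4C)⁻¹) := by
            rw [Matrix.conjTranspose_mul]
            simp only [Matrix.mul_assoc]
        _ = J4 := by rw [hright]; simp

/-- `z ∈ 3𝓔`. -/
def Is3E (z : ℂ) : Prop := ∃ a b : ℤ, z = 3 * ((a:ℂ) + (b:ℂ) * ω)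

lemma Is3E.zero : Is3E 0 := ⟨0, 0, by simp⟩
lemma Is3E.add {x y : ℂ} (hx : Is3E x) (hy : Is3E y) : Is3E (x + y) := by
  obtain ⟨a, b, rfl⟩ := hx; obtain ⟨c, d, rfl⟩ := hy
  exact ⟨a + c, b + d, by push_cast; ring⟩
lemma Is3E.neg {x : ℂ} (hx : Is3E x) : Is3E (-x) := by
  obtain ⟨a, b, rfl⟩ := hx
  exact ⟨-a, -b, by push_cast; ring⟩
lemma Is3E.isE {x : ℂ} (hx : Is3E x) : IsEisenstein x := by
  obtain ⟨a, b, rfl⟩ := hx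
  exact ⟨3*a, 3*b, by push_cast; ring⟩
lemma Is3E.mulE {x y : ℂ} (hx : Is3E x) (hy : IsEisenstein y) : Is3E (x * y) := by
  obtain ⟨a, b, rfl⟩ := hx
  obtain ⟨e, f, hef⟩ := (IsEisenstein.mul ⟨a, b, rfl⟩ hy : IsEisenstein (((a:ℂ) + (b:ℂ)*ω) * y))
  exact ⟨e, f, by rw [mul_assoc, hef]⟩
lemma is3E_sum {f : Fin 4 → ℂ} (hf : ∀ k, Is3E (f k)) : Is3E (∑ k, f k) := by
  rw [Fin.sum_univ_four]
  exact (((hf 0).add (hf 1)).add (hf 2)).add (hf 3)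

/-- The level-3 congruence condition on the matrix part. -/
def Cong3 (M : M4C) : Prop := ∀ i j, Is3E ((M - 1) i j)

/-- The principal congruence subgroup `G₃[3]`. -/
def G33gp : Subgroup (GL (Fin 4) ℂ) where
  carrier := {γ | γ ∈ G3gp ∧ Cong3 (γ : M4C)}
  one_mem' := by
    refine ⟨one_mem _, fun i j => ?_⟩
    simpa using Is3E.zero
  mul_mem' := by
    rintro a b ⟨ha1, ha2⟩ ⟨hb1, hb2⟩
    refine ⟨mul_mem ha1 hb1, fun i j => ?_⟩
    have key : ((a * b : GL (Fin 4) ℂ) : M4C) - 1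
        = ((a : M4C) - 1) * (b : M4C) + ((b : M4C) - 1) := by
      push_cast
      noncomm_ring
    rw [key, Matrix.add_apply]
    refine Is3E.add ?_ (hb2 i j)
    rw [Matrix.mul_apply]
    exact is3E_sum fun k => (ha2 i k).mulE (hb1.1 k j)
  inv_mem' := by
    rintro γ ⟨h1, h2⟩
    have hmem : γ⁻¹ ∈ G3gp := inv_mem h1
    refine ⟨hmem, fun i j => ?_⟩
    have key : ((γ⁻¹ : GL (Fin 4) ℂ) : M4C) - 1
        = ((γ⁻¹ : GL (Fin 4) ℂ) : M4C) * (1 - (γ : M4C)) := by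
      have hγ : ((γ⁻¹ : GL (Fin 4) ℂ) : M4C) * (γ : M4C) = 1 := γ.inv_mul
      rw [mul_sub, hγ, mul_one]
    rw [key, Matrix.mul_apply]
    refine is3E_sum fun k => ?_
    have : Is3E ((1 - (γ : M4C)) k j) := by
      have := (h2 k j).neg
      simpa [Matrix.sub_apply, Matrix.neg_apply] using this
    have h3 : Is3E ((1 - (γ : M4C)) k j * ((γ⁻¹ : GL (Fin 4) ℂ) : M4C) i k) :=
      this.mulE (hmem.1 i k)
    rw [mul_comm] at h3
    exact h3

lemma mem_G3gp {γ : GL (Fin 4) ℂ} :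
    γ ∈ G3gp ↔ (IsEisM (γ : M4C) ∧ (γ : M4C)ᴴ * J4 * (γ : M4C) = J4) := Iff.rfl

lemma mem_G33gp {γ : GL (Fin 4) ℂ} : γ ∈ G33gp ↔ (γ ∈ G3gp ∧ Cong3 (γ : M4C)) := Iff.rfl

----------------------------------------------------------------
-- PART D : reduction of matrices mod 3
----------------------------------------------------------------
open EisRed

/-- The "constant part" of the reduction mod `(ω-1)²` of a matrix. -/
noncomputable def r1 (M : M4C) : M43 := Matrix.of fun i j => e1 (M i j)
/-- The "nilpotent part" of the reduction. -/
noncomputable def r2 (M : M4C) : M43 := Matrix.of fun i j => e2 (M i j)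

lemma r1_one : r1 1 = 1 := by
  ext i j
  by_cases h : i = j
  · subst h; simp [r1, Matrix.one_apply, e1_one]
  · simp [r1, Matrix.one_apply, h, e1_zero]

lemma r2_one : r2 1 = 0 := by
  ext i j
  by_cases h : i = j
  · subst h; simp [r2, Matrix.one_apply, e2_one]
  · simp [r2, Matrix.one_apply, h, e2_zero]

lemma r1_neg {M : M4C} (h : IsEisM M) : r1 (-M) = -(r1 M) := by
  ext i j
  simp only [r1, Matrix.of_apply, Matrix.neg_apply]
  exact e1_neg (h i j)

lemma r2_neg {M : M4C} (h : IsEisM M) : r2 (-M) = -(r2 M) := by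
  ext i j
  simp only [r2, Matrix.of_apply, Matrix.neg_apply]
  exact e2_neg (h i j)

lemma e1_sum {f : Fin 4 → ℂ} (hf : ∀ k, IsEisenstein (f k)) :
    e1 (∑ k, f k) = ∑ k, e1 (f k) := by
  rw [Fin.sum_univ_four, Fin.sum_univ_four,
    e1_add (((hf 0).add (hf 1)).add (hf 2)) (hf 3),
    e1_add ((hf 0).add (hf 1)) (hf 2), e1_add (hf 0) (hf 1)]

lemma e2_sum {f : Fin 4 → ℂ} (hf : ∀ k, IsEisenstein (f k)) :
    e2 (∑ k, f k) = ∑ k, e2 (f k) := by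
  rw [Fin.sum_univ_four, Fin.sum_univ_four,
    e2_add (((hf 0).add (hf 1)).add (hf 2)) (hf 3),
    e2_add ((hf 0).add (hf 1)) (hf 2), e2_add (hf 0) (hf 1)]

lemma r1_mul {A B : M4C} (hA : IsEisM A) (hB : IsEisM B) :
    r1 (A * B) = r1 A * r1 B := by
  ext i j
  simp only [r1, Matrix.of_apply, Matrix.mul_apply]
  rw [e1_sum fun k => (hA i k).mul (hB k j)]
  exact Finset.sum_congr rfl fun k _ => e1_mul (hA i k) (hB k j)

lemma r2_mul {A B : M4C} (hA : IsEisM A) (hB : IsEisM B) :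
    r2 (A * B) = r1 A * r2 B + r2 A * r1 B := by
  ext i j
  simp only [r2, r1, Matrix.of_apply, Matrix.mul_apply, Matrix.add_apply]
  rw [e2_sum fun k => (hA i k).mul (hB k j), ← Finset.sum_add_distrib]
  exact Finset.sum_congr rfl fun k _ => e2_mul (hA i k) (hB k j)

/-- Characterization of level-3 congruence in terms of the reduction. -/
lemma cong3_iff {M : M4C} (hM : IsEisM M) :
    Cong3 M ↔ (r1 M = 1 ∧ r2 M = 0) := by
  constructor
  · intro h
    constructor
    · ext i j
      have h3 : ∃ a b : ℤ, (M - 1) i j = 3*((a:ℂ)+(b:ℂ)*ω) := h i j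
      obtain ⟨a, b, hab⟩ := h3
      have hMij : M i j = ((3*a : ℤ):ℂ) + ((3*b : ℤ):ℂ)*ω + (1 : M4C) i j := by
        have : (M - 1) i j = M i j - (1 : M4C) i j := by simp [Matrix.sub_apply]
        rw [this] at hab
        push_cast
        linear_combination hab
      by_cases hij : i = j
      · subst hij
        simp only [r1, Matrix.of_apply, hMij, Matrix.one_apply_eq]
        have : ((3*a : ℤ):ℂ) + ((3*b : ℤ):ℂ)*ω + 1 = ((3*a+1 : ℤ):ℂ) + ((3*b : ℤ):ℂ)*ω := by
          push_cast; ring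
        rw [this, e1_eval]
        push_cast
        have h3' : (3 : ZMod 3) = 0 := by decide
        linear_combination (((a : ZMod 3)) + b) * h3'
      · simp only [r1, Matrix.of_apply, hMij, Matrix.one_apply_ne hij]
        rw [add_zero, e1_eval]
        push_cast
        have h3' : (3 : ZMod 3) = 0 := by decide
        linear_combination (((a : ZMod 3)) + b) * h3'
    · ext i j
      obtain ⟨a, b, hab⟩ := h i j
      have hMij : M i j = ((3*a : ℤ):ℂ) + ((3*b : ℤ):ℂ)*ω + (1 : M4C) i j := by
        have : (M - 1) i j = M i j - (1 : M4C) i j := by simp [Matrix.sub_apply]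
        rw [this] at hab
        push_cast
        linear_combination hab
      by_cases hij : i = j
      · subst hij
        simp only [r2, Matrix.of_apply, hMij, Matrix.one_apply_eq]
        have : ((3*a : ℤ):ℂ) + ((3*b : ℤ):ℂ)*ω + 1 = ((3*a+1 : ℤ):ℂ) + ((3*b : ℤ):ℂ)*ω := by
          push_cast; ring
        rw [this, e2_eval]
        simp only [Matrix.zero_apply]
        push_cast
        have h3' : (3 : ZMod 3) = 0 := by decide
        linear_combination ((b : ZMod 3)) * h3'
      · simp only [r2, Matrix.of_apply, hMij, Matrix.one_apply_ne hij]
        rw [add_zero, e2_eval]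
        simp only [Matrix.zero_apply]
        push_cast
        have h3' : (3 : ZMod 3) = 0 := by decide
        linear_combination ((b : ZMod 3)) * h3'
  · rintro ⟨h1, h2⟩ i j
    have hz : IsEisenstein ((M - 1) i j) := by
      have : (M - 1) i j = M i j - (1 : M4C) i j := by simp [Matrix.sub_apply]
      rw [this]
      by_cases hij : i = j
      · subst hij; rw [Matrix.one_apply_eq]; exact (hM i i).sub IsEisenstein.one
      · rw [Matrix.one_apply_ne hij]; simpa using (hM i j).sub IsEisenstein.zero
    refine mem_three hz ?_ ?_
    · have he1 : e1 ((M - 1) i j) = e1 (M i j) - e1 ((1:M4C) i j) := by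
        have hsplit : M i j = (M - 1) i j + (1:M4C) i j := by simp [Matrix.sub_apply]
        have h1' : IsEisenstein ((1:M4C) i j) := by
          by_cases hij : i = j
          · subst hij; rw [Matrix.one_apply_eq]; exact IsEisenstein.one
          · rw [Matrix.one_apply_ne hij]; exact IsEisenstein.zero
        have := e1_add hz h1'
        rw [← hsplit] at this
        linear_combination -this
      rw [he1]
      have : e1 (M i j) = r1 M i j := rfl
      rw [this, h1]
      by_cases hij : i = j
      · subst hij; simp [Matrix.one_apply_eq, e1_one]
      · simp [Matrix.one_apply_ne hij, e1_zero]
    · have he2 : e2 ((M - 1) i j) = e2 (M i j) - e2 ((1:M4C) i j) := by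
        have hsplit : M i j = (M - 1) i j + (1:M4C) i j := by simp [Matrix.sub_apply]
        have h1' : IsEisenstein ((1:M4C) i j) := by
          by_cases hij : i = j
          · subst hij; rw [Matrix.one_apply_eq]; exact IsEisenstein.one
          · rw [Matrix.one_apply_ne hij]; exact IsEisenstein.zero
        have := e2_add hz h1'
        rw [← hsplit] at this
        linear_combination -this
      rw [he2]
      have : e2 (M i j) = r2 M i j := rfl
      rw [this, h2]
      by_cases hij : i = j
      · subst hij; simp [Matrix.one_apply_eq, e2_one]
      · simp [Matrix.one_apply_ne hij, e2_zero]

lemma vecMulVec_mul_vecMulVec (a v c d : Fin 4 → ℂ) :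
    vecMulVec a v * vecMulVec c d = (v ⬝ᵥ c) • vecMulVec a d := by
  ext i j
  simp only [Matrix.mul_apply, vecMulVec_apply, Matrix.smul_apply, dotProduct,
    smul_eq_mul, Finset.sum_mul]
  exact Finset.sum_congr rfl fun k _ => by ring

lemma mul_vecMulVec (M : M4C) (a v : Fin 4 → ℂ) :
    M * vecMulVec a v = vecMulVec (M *ᵥ a) v := by
  ext i j
  simp only [Matrix.mul_apply, vecMulVec_apply, Matrix.mulVec, dotProduct, Finset.sum_mul]
  exact Finset.sum_congr rfl fun k _ => by ring

lemma vecMulVec_mul (M : M4C) (a v : Fin 4 → ℂ) :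
    vecMulVec a v * M = vecMulVec a (v ᵥ* M) := by
  ext i j
  simp only [Matrix.mul_apply, vecMulVec_apply, Matrix.vecMul, dotProduct, Finset.mul_sum]
  exact Finset.sum_congr rfl fun k _ => by ring

lemma vecMulVec_conjT (a v : Fin 4 → ℂ) :
    (vecMulVec a v)ᴴ = vecMulVec (star v) (star a) := by
  ext i j
  simp [vecMulVec_apply, Matrix.conjTranspose_apply, mul_comm]

lemma J4_transpose : J4ᵀ = J4 := by
  ext i j
  fin_cases i <;> fin_cases j <;> simp [J4, Matrix.vecHead, Matrix.vecTail]

lemma J4_star_entries : ∀ i j, star (J4 i j) = J4 i j := by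
  intro i j
  fin_cases i <;> fin_cases j <;> simp [J4, Matrix.vecHead, Matrix.vecTail]

lemma star_one_sub_omega : star ((1:ℂ) - ω) = 2 + ω := by
  have : star ((1:ℂ) - ω) = 1 - (starRingEnd ℂ) ω := by
    simp [Complex.star_def, map_sub]
  rw [this, omega_star]; ring

section Tri

variable (b : Fin 4 → ℂ)

/-- the covector of the triflection -/
noncomputable abbrev triW : Fin 4 → ℂ := Matrix.vecMul (star b) J4

/-- the rank-one part -/
noncomputable abbrev triP : M4C := vecMulVec b (triW b)

lemma triW_star (hsb : star b = b) : star (triW b) = triW b := by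
  ext j
  simp only [triW, Pi.star_apply, Matrix.vecMul, dotProduct, star_sum, star_mul',
    J4_star_entries, star_star]
  refine Finset.sum_congr rfl fun k _ => ?_
  rw [← Pi.star_apply b k, hsb]

lemma J4_mulVec (hsb : star b = b) : J4 *ᵥ b = triW b := by
  rw [triW, hsb, ← Matrix.vecMul_transpose, J4_transpose]

lemma triP_sq (hw : (triW b) ⬝ᵥ b = -1) : triP b * triP b = -(triP b) := by
  rw [triP, vecMulVec_mul_vecMulVec, hw, neg_smul, one_smul]

lemma one_add_smul_mul {P : M4C} (hP : P * P = -P) {c d : ℂ} (hcd : c + d - c * d = 0) :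
    (1 + c • P) * (1 + d • P) = 1 := by
  have expand : (1 + c • P) * (1 + d • P)
      = 1 + c • P + d • P + (c * d) • (P * P) := by
    rw [Matrix.mul_add, Matrix.add_mul, Matrix.add_mul, smul_mul_smul_comm]
    simp only [Matrix.mul_one, Matrix.one_mul]
    abel
  rw [expand, hP, smul_neg]
  have hz : c • P + d • P - (c * d) • P = 0 := by
    rw [← add_smul, ← sub_smul, hcd, zero_smul]
  calc 1 + c • P + d • P + -((c * d) • P) = 1 + (c • P + d • P - (c * d) • P) := by abel
    _ = 1 := by rw [hz, add_zero]

lemma tri_coeff : ((1:ℂ) - ω) + (2 + ω) - (1 - ω) * (2 + ω) = 0 := by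
  linear_combination omega_sq

lemma tri_coeff' : ((2:ℂ) + ω) + (1 - ω) - (2 + ω) * (1 - ω) = 0 := by
  linear_combination omega_sq

lemma tri_mul_inv (hw : (triW b) ⬝ᵥ b = -1) :
    triflectionMatrix b * (1 + (2 + ω) • triP b) = 1 := by
  rw [triflectionMatrix]
  exact one_add_smul_mul (triP_sq b hw) tri_coeff

lemma tri_inv_mul (hw : (triW b) ⬝ᵥ b = -1) :
    (1 + (2 + ω) • triP b) * triflectionMatrix b = 1 := by
  rw [triflectionMatrix]
  exact one_add_smul_mul (triP_sq b hw) tri_coeff'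

lemma tri_form (hsb : star b = b) (hw : (triW b) ⬝ᵥ b = -1) :
    (triflectionMatrix b)ᴴ * J4 * triflectionMatrix b = J4 := by
  have hsw := triW_star b hsb
  have hJb := J4_mulVec b hsb
  have hTH : (triflectionMatrix b)ᴴ = 1 + (2 + ω) • vecMulVec (triW b) b := by
    rw [triflectionMatrix, Matrix.conjTranspose_add, Matrix.conjTranspose_one,
      Matrix.conjTranspose_smul, vecMulVec_conjT, hsw, hsb, star_one_sub_omega]
  rw [hTH, triflectionMatrix]
  have hQJ : vecMulVec (triW b) b * J4 = vecMulVec (triW b) (triW b) := by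
    rw [vecMulVec_mul, triW, hsb]
  have hJP : J4 * triP b = vecMulVec (triW b) (triW b) := by
    rw [triP, mul_vecMulVec, hJb]
  have hWP : vecMulVec (triW b) (triW b) * triP b = -(vecMulVec (triW b) (triW b)) := by
    rw [triP, vecMulVec_mul_vecMulVec, hw, neg_smul, one_smul]
  have expand : (1 + (2 + ω) • vecMulVec (triW b) b) * J4 * (1 + (1 - ω) • triP b)
      = J4 + (1 - ω) • (J4 * triP b) + (2 + ω) • (vecMulVec (triW b) b * J4)
        + ((1 - ω) * (2 + ω)) • (vecMulVec (triW b) b * J4 * triP b) := by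
    simp only [Matrix.add_mul, Matrix.mul_add, Matrix.one_mul, Matrix.mul_one,
      smul_mul_assoc, Matrix.mul_smul, smul_smul, smul_add]
    abel
  rw [expand, hJP, hQJ, hWP, smul_neg]
  have hz : (1 - ω) • vecMulVec (triW b) (triW b) + (2 + ω) • vecMulVec (triW b) (triW b)
      - ((1 - ω) * (2 + ω)) • vecMulVec (triW b) (triW b) = 0 := by
    rw [← add_smul, ← sub_smul]
    have : ((1:ℂ) - ω) + (2 + ω) - (1 - ω) * (2 + ω) = 0 := by linear_combination omega_sq
    rw [this, zero_smul]
  calc J4 + (1 - ω) • vecMulVec (triW b) (triW b) + (2 + ω) • vecMulVec (triW b) (triW b)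
        + -(((1 - ω) * (2 + ω)) • vecMulVec (triW b) (triW b))
      = J4 + ((1 - ω) • vecMulVec (triW b) (triW b) + (2 + ω) • vecMulVec (triW b) (triW b)
        - ((1 - ω) * (2 + ω)) • vecMulVec (triW b) (triW b)) := by abel
    _ = J4 := by rw [hz, add_zero]

end Tri

----------------------------------------------------------------
-- PART F : the six triflections concretely
----------------------------------------------------------------
open EisRed

lemma tri_entry (b : Fin 4 → ℂ) (bz wz : Fin 4 → ℤ)
    (hb : b = fun i => ((bz i : ℤ) : ℂ)) (hw' : triW b = fun j => ((wz j : ℤ) : ℂ))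
    (i j : Fin 4) :
    triflectionMatrix b i j
      = (((if i = j then 1 else 0) + bz i * wz j : ℤ) : ℂ)
        + ((-(bz i * wz j) : ℤ) : ℂ) * ω := by
  have hbi : b i = ((bz i : ℤ) : ℂ) := by rw [hb]
  have hwj : Matrix.vecMul (star b) J4 j = ((wz j : ℤ) : ℂ) := by
    rw [show Matrix.vecMul (star b) J4 = triW b from rfl, hw']
  rw [triflectionMatrix]
  rw [Matrix.add_apply, Matrix.smul_apply, Matrix.vecMulVec_apply, hbi, hwj, Matrix.one_apply,
    smul_eq_mul]
  push_cast
  split_ifs <;> ring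

lemma tri_isE (b : Fin 4 → ℂ) (bz wz : Fin 4 → ℤ)
    (hb : b = fun i => ((bz i : ℤ) : ℂ)) (hw' : triW b = fun j => ((wz j : ℤ) : ℂ)) :
    IsEisM (triflectionMatrix b) := by
  intro i j
  exact ⟨_, _, tri_entry b bz wz hb hw' i j⟩

lemma tri_r1 (b : Fin 4 → ℂ) (bz wz : Fin 4 → ℤ)
    (hb : b = fun i => ((bz i : ℤ) : ℂ)) (hw' : triW b = fun j => ((wz j : ℤ) : ℂ)) :
    r1 (triflectionMatrix b) = 1 := by
  ext i j
  show e1 (triflectionMatrix b i j) = (1 : M43) i j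
  rw [tri_entry b bz wz hb hw' i j, e1_eval, Matrix.one_apply]
  push_cast
  split_ifs <;> ring

lemma tri_r2 (b : Fin 4 → ℂ) (bz wz : Fin 4 → ℤ)
    (hb : b = fun i => ((bz i : ℤ) : ℂ)) (hw' : triW b = fun j => ((wz j : ℤ) : ℂ)) :
    r2 (triflectionMatrix b) = Matrix.of fun i j => ((-(bz i * wz j) : ℤ) : ZMod 3) := by
  ext i j
  show e2 (triflectionMatrix b i j) = _
  rw [tri_entry b bz wz hb hw' i j, e2_eval]
  rfl

/-- the reductions mod `(1-ω)²` of the six triflections (nilpotent parts) -/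
def nmat : Fin 6 → M43 :=
  ![!![0,0,0,0; 0,0,0,0; 0,0,1,0; 0,0,0,0],
    !![0,0,0,0; 0,0,0,0; 0,0,0,0; 0,0,0,1],
    !![0,0,0,0; 2,0,1,0; 2,0,1,0; 0,0,0,0],
    !![0,0,0,0; 2,0,2,0; 1,0,1,0; 0,0,0,0],
    !![0,0,0,0; 2,0,0,1; 0,0,0,0; 2,0,0,1],
    !![0,0,0,0; 2,0,0,2; 0,0,0,0; 1,0,0,1]]

noncomputable def bC0 : Fin 4 → ℂ := ![(0 : ℂ), (0 : ℂ), (1 : ℂ), (0 : ℂ)]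
def bZ0 : Fin 4 → ℤ := ![(0 : ℤ), (0 : ℤ), (1 : ℤ), (0 : ℤ)]
def wZ0 : Fin 4 → ℤ := ![(0 : ℤ), (0 : ℤ), (-1 : ℤ), (0 : ℤ)]

lemma hbz0 : bC0 = fun i => ((bZ0 i : ℤ) : ℂ) := by
  funext i
  fin_cases i <;> norm_num [bC0, bZ0, Matrix.vecHead, Matrix.vecTail]

lemma hsb0 : star bC0 = bC0 := by
  funext i
  fin_cases i <;> norm_num [bC0, Matrix.vecHead, Matrix.vecTail]

lemma hwv0 : triW bC0 = fun j => ((wZ0 j : ℤ) : ℂ) := by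
  funext j
  rw [triW, hsb0]
  fin_cases j <;>
    norm_num [bC0, wZ0, Matrix.vecMul, dotProduct, Fin.sum_univ_four, J4,
      Matrix.vecHead, Matrix.vecTail, Matrix.cons_val_two, Matrix.cons_val_three]

lemma hwdot0 : triW bC0 ⬝ᵥ bC0 = -1 := by
  rw [hwv0, hbz0]
  norm_num [dotProduct, Fin.sum_univ_four, wZ0, bZ0, Matrix.vecHead, Matrix.vecTail,
    Matrix.cons_val_two, Matrix.cons_val_three]

lemma bC0_mem : bC0 ∈ triVecs := by
  rw [show bC0 = ![(0 : ℂ), (0 : ℂ), (1 : ℂ), (0 : ℂ)] from rfl]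
  simp [triVecs]

noncomputable def tGL0 : GL (Fin 4) ℂ :=
  ⟨triflectionMatrix bC0, 1 + (2 + ω) • triP bC0,
    tri_mul_inv _ hwdot0, tri_inv_mul _ hwdot0⟩

lemma tGL0_mem : tGL0 ∈ triflections := ⟨bC0, bC0_mem, rfl⟩

lemma tGL0_G3 : tGL0 ∈ G3gp := by
  rw [mem_G3gp]
  exact ⟨tri_isE _ bZ0 wZ0 hbz0 hwv0, tri_form _ hsb0 hwdot0⟩

lemma r1_t0 : r1 (triflectionMatrix bC0) = 1 := tri_r1 _ bZ0 wZ0 hbz0 hwv0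

lemma r2_t0 : r2 (triflectionMatrix bC0) = nmat 0 := by
  rw [tri_r2 _ bZ0 wZ0 hbz0 hwv0]
  ext i j
  fin_cases i <;> fin_cases j <;> decide

noncomputable def bC1 : Fin 4 → ℂ := ![(0 : ℂ), (0 : ℂ), (0 : ℂ), (1 : ℂ)]
def bZ1 : Fin 4 → ℤ := ![(0 : ℤ), (0 : ℤ), (0 : ℤ), (1 : ℤ)]
def wZ1 : Fin 4 → ℤ := ![(0 : ℤ), (0 : ℤ), (0 : ℤ), (-1 : ℤ)]

lemma hbz1 : bC1 = fun i => ((bZ1 i : ℤ) : ℂ) := by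
  funext i
  fin_cases i <;> norm_num [bC1, bZ1, Matrix.vecHead, Matrix.vecTail]

lemma hsb1 : star bC1 = bC1 := by
  funext i
  fin_cases i <;> norm_num [bC1, Matrix.vecHead, Matrix.vecTail]

lemma hwv1 : triW bC1 = fun j => ((wZ1 j : ℤ) : ℂ) := by
  funext j
  rw [triW, hsb1]
  fin_cases j <;>
    norm_num [bC1, wZ1, Matrix.vecMul, dotProduct, Fin.sum_univ_four, J4,
      Matrix.vecHead, Matrix.vecTail, Matrix.cons_val_two, Matrix.cons_val_three]

lemma hwdot1 : triW bC1 ⬝ᵥ bC1 = -1 := by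
  rw [hwv1, hbz1]
  norm_num [dotProduct, Fin.sum_univ_four, wZ1, bZ1, Matrix.vecHead, Matrix.vecTail,
    Matrix.cons_val_two, Matrix.cons_val_three]

lemma bC1_mem : bC1 ∈ triVecs := by
  rw [show bC1 = ![(0 : ℂ), (0 : ℂ), (0 : ℂ), (1 : ℂ)] from rfl]
  simp [triVecs]

noncomputable def tGL1 : GL (Fin 4) ℂ :=
  ⟨triflectionMatrix bC1, 1 + (2 + ω) • triP bC1,
    tri_mul_inv _ hwdot1, tri_inv_mul _ hwdot1⟩

lemma tGL1_mem : tGL1 ∈ triflections := ⟨bC1, bC1_mem, rfl⟩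

lemma tGL1_G3 : tGL1 ∈ G3gp := by
  rw [mem_G3gp]
  exact ⟨tri_isE _ bZ1 wZ1 hbz1 hwv1, tri_form _ hsb1 hwdot1⟩

lemma r1_t1 : r1 (triflectionMatrix bC1) = 1 := tri_r1 _ bZ1 wZ1 hbz1 hwv1

lemma r2_t1 : r2 (triflectionMatrix bC1) = nmat 1 := by
  rw [tri_r2 _ bZ1 wZ1 hbz1 hwv1]
  ext i j
  fin_cases i <;> fin_cases j <;> decide

noncomputable def bC2 : Fin 4 → ℂ := ![(0 : ℂ), (1 : ℂ), (1 : ℂ), (0 : ℂ)]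
def bZ2 : Fin 4 → ℤ := ![(0 : ℤ), (1 : ℤ), (1 : ℤ), (0 : ℤ)]
def wZ2 : Fin 4 → ℤ := ![(1 : ℤ), (0 : ℤ), (-1 : ℤ), (0 : ℤ)]

lemma hbz2 : bC2 = fun i => ((bZ2 i : ℤ) : ℂ) := by
  funext i
  fin_cases i <;> norm_num [bC2, bZ2, Matrix.vecHead, Matrix.vecTail]

lemma hsb2 : star bC2 = bC2 := by
  funext i
  fin_cases i <;> norm_num [bC2, Matrix.vecHead, Matrix.vecTail]

lemma hwv2 : triW bC2 = fun j => ((wZ2 j : ℤ) : ℂ) := by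
  funext j
  rw [triW, hsb2]
  fin_cases j <;>
    norm_num [bC2, wZ2, Matrix.vecMul, dotProduct, Fin.sum_univ_four, J4,
      Matrix.vecHead, Matrix.vecTail, Matrix.cons_val_two, Matrix.cons_val_three]

lemma hwdot2 : triW bC2 ⬝ᵥ bC2 = -1 := by
  rw [hwv2, hbz2]
  norm_num [dotProduct, Fin.sum_univ_four, wZ2, bZ2, Matrix.vecHead, Matrix.vecTail,
    Matrix.cons_val_two, Matrix.cons_val_three]

lemma bC2_mem : bC2 ∈ triVecs := by
  rw [show bC2 = ![(0 : ℂ), (1 : ℂ), (1 : ℂ), (0 : ℂ)] from rfl]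
  simp [triVecs]

noncomputable def tGL2 : GL (Fin 4) ℂ :=
  ⟨triflectionMatrix bC2, 1 + (2 + ω) • triP bC2,
    tri_mul_inv _ hwdot2, tri_inv_mul _ hwdot2⟩

lemma tGL2_mem : tGL2 ∈ triflections := ⟨bC2, bC2_mem, rfl⟩

lemma tGL2_G3 : tGL2 ∈ G3gp := by
  rw [mem_G3gp]
  exact ⟨tri_isE _ bZ2 wZ2 hbz2 hwv2, tri_form _ hsb2 hwdot2⟩

lemma r1_t2 : r1 (triflectionMatrix bC2) = 1 := tri_r1 _ bZ2 wZ2 hbz2 hwv2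

lemma r2_t2 : r2 (triflectionMatrix bC2) = nmat 2 := by
  rw [tri_r2 _ bZ2 wZ2 hbz2 hwv2]
  ext i j
  fin_cases i <;> fin_cases j <;> decide

noncomputable def bC3 : Fin 4 → ℂ := ![(0 : ℂ), (1 : ℂ), (-1 : ℂ), (0 : ℂ)]
def bZ3 : Fin 4 → ℤ := ![(0 : ℤ), (1 : ℤ), (-1 : ℤ), (0 : ℤ)]
def wZ3 : Fin 4 → ℤ := ![(1 : ℤ), (0 : ℤ), (1 : ℤ), (0 : ℤ)]

lemma hbz3 : bC3 = fun i => ((bZ3 i : ℤ) : ℂ) := by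
  funext i
  fin_cases i <;> norm_num [bC3, bZ3, Matrix.vecHead, Matrix.vecTail]

lemma hsb3 : star bC3 = bC3 := by
  funext i
  fin_cases i <;> norm_num [bC3, Matrix.vecHead, Matrix.vecTail]

lemma hwv3 : triW bC3 = fun j => ((wZ3 j : ℤ) : ℂ) := by
  funext j
  rw [triW, hsb3]
  fin_cases j <;>
    norm_num [bC3, wZ3, Matrix.vecMul, dotProduct, Fin.sum_univ_four, J4,
      Matrix.vecHead, Matrix.vecTail, Matrix.cons_val_two, Matrix.cons_val_three]

lemma hwdot3 : triW bC3 ⬝ᵥ bC3 = -1 := by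
  rw [hwv3, hbz3]
  norm_num [dotProduct, Fin.sum_univ_four, wZ3, bZ3, Matrix.vecHead, Matrix.vecTail,
    Matrix.cons_val_two, Matrix.cons_val_three]

lemma bC3_mem : bC3 ∈ triVecs := by
  rw [show bC3 = ![(0 : ℂ), (1 : ℂ), (-1 : ℂ), (0 : ℂ)] from rfl]
  simp [triVecs]

noncomputable def tGL3 : GL (Fin 4) ℂ :=
  ⟨triflectionMatrix bC3, 1 + (2 + ω) • triP bC3,
    tri_mul_inv _ hwdot3, tri_inv_mul _ hwdot3⟩

lemma tGL3_mem : tGL3 ∈ triflections := ⟨bC3, bC3_mem, rfl⟩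

lemma tGL3_G3 : tGL3 ∈ G3gp := by
  rw [mem_G3gp]
  exact ⟨tri_isE _ bZ3 wZ3 hbz3 hwv3, tri_form _ hsb3 hwdot3⟩

lemma r1_t3 : r1 (triflectionMatrix bC3) = 1 := tri_r1 _ bZ3 wZ3 hbz3 hwv3

lemma r2_t3 : r2 (triflectionMatrix bC3) = nmat 3 := by
  rw [tri_r2 _ bZ3 wZ3 hbz3 hwv3]
  ext i j
  fin_cases i <;> fin_cases j <;> decide

noncomputable def bC4 : Fin 4 → ℂ := ![(0 : ℂ), (1 : ℂ), (0 : ℂ), (1 : ℂ)]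
def bZ4 : Fin 4 → ℤ := ![(0 : ℤ), (1 : ℤ), (0 : ℤ), (1 : ℤ)]
def wZ4 : Fin 4 → ℤ := ![(1 : ℤ), (0 : ℤ), (0 : ℤ), (-1 : ℤ)]

lemma hbz4 : bC4 = fun i => ((bZ4 i : ℤ) : ℂ) := by
  funext i
  fin_cases i <;> norm_num [bC4, bZ4, Matrix.vecHead, Matrix.vecTail]

lemma hsb4 : star bC4 = bC4 := by
  funext i
  fin_cases i <;> norm_num [bC4, Matrix.vecHead, Matrix.vecTail]

lemma hwv4 : triW bC4 = fun j => ((wZ4 j : ℤ) : ℂ) := by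
  funext j
  rw [triW, hsb4]
  fin_cases j <;>
    norm_num [bC4, wZ4, Matrix.vecMul, dotProduct, Fin.sum_univ_four, J4,
      Matrix.vecHead, Matrix.vecTail, Matrix.cons_val_two, Matrix.cons_val_three]

lemma hwdot4 : triW bC4 ⬝ᵥ bC4 = -1 := by
  rw [hwv4, hbz4]
  norm_num [dotProduct, Fin.sum_univ_four, wZ4, bZ4, Matrix.vecHead, Matrix.vecTail,
    Matrix.cons_val_two, Matrix.cons_val_three]

lemma bC4_mem : bC4 ∈ triVecs := by
  rw [show bC4 = ![(0 : ℂ), (1 : ℂ), (0 : ℂ), (1 : ℂ)] from rfl]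
  simp [triVecs]

noncomputable def tGL4 : GL (Fin 4) ℂ :=
  ⟨triflectionMatrix bC4, 1 + (2 + ω) • triP bC4,
    tri_mul_inv _ hwdot4, tri_inv_mul _ hwdot4⟩

lemma tGL4_mem : tGL4 ∈ triflections := ⟨bC4, bC4_mem, rfl⟩

lemma tGL4_G3 : tGL4 ∈ G3gp := by
  rw [mem_G3gp]
  exact ⟨tri_isE _ bZ4 wZ4 hbz4 hwv4, tri_form _ hsb4 hwdot4⟩

lemma r1_t4 : r1 (triflectionMatrix bC4) = 1 := tri_r1 _ bZ4 wZ4 hbz4 hwv4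

lemma r2_t4 : r2 (triflectionMatrix bC4) = nmat 4 := by
  rw [tri_r2 _ bZ4 wZ4 hbz4 hwv4]
  ext i j
  fin_cases i <;> fin_cases j <;> decide

noncomputable def bC5 : Fin 4 → ℂ := ![(0 : ℂ), (1 : ℂ), (0 : ℂ), (-1 : ℂ)]
def bZ5 : Fin 4 → ℤ := ![(0 : ℤ), (1 : ℤ), (0 : ℤ), (-1 : ℤ)]
def wZ5 : Fin 4 → ℤ := ![(1 : ℤ), (0 : ℤ), (0 : ℤ), (1 : ℤ)]

lemma hbz5 : bC5 = fun i => ((bZ5 i : ℤ) : ℂ) := by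
  funext i
  fin_cases i <;> norm_num [bC5, bZ5, Matrix.vecHead, Matrix.vecTail]

lemma hsb5 : star bC5 = bC5 := by
  funext i
  fin_cases i <;> norm_num [bC5, Matrix.vecHead, Matrix.vecTail]

lemma hwv5 : triW bC5 = fun j => ((wZ5 j : ℤ) : ℂ) := by
  funext j
  rw [triW, hsb5]
  fin_cases j <;>
    norm_num [bC5, wZ5, Matrix.vecMul, dotProduct, Fin.sum_univ_four, J4,
      Matrix.vecHead, Matrix.vecTail, Matrix.cons_val_two, Matrix.cons_val_three]

lemma hwdot5 : triW bC5 ⬝ᵥ bC5 = -1 := by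
  rw [hwv5, hbz5]
  norm_num [dotProduct, Fin.sum_univ_four, wZ5, bZ5, Matrix.vecHead, Matrix.vecTail,
    Matrix.cons_val_two, Matrix.cons_val_three]

lemma bC5_mem : bC5 ∈ triVecs := by
  rw [show bC5 = ![(0 : ℂ), (1 : ℂ), (0 : ℂ), (-1 : ℂ)] from rfl]
  simp [triVecs]

noncomputable def tGL5 : GL (Fin 4) ℂ :=
  ⟨triflectionMatrix bC5, 1 + (2 + ω) • triP bC5,
    tri_mul_inv _ hwdot5, tri_inv_mul _ hwdot5⟩

lemma tGL5_mem : tGL5 ∈ triflections := ⟨bC5, bC5_mem, rfl⟩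

lemma tGL5_G3 : tGL5 ∈ G3gp := by
  rw [mem_G3gp]
  exact ⟨tri_isE _ bZ5 wZ5 hbz5 hwv5, tri_form _ hsb5 hwdot5⟩

lemma r1_t5 : r1 (triflectionMatrix bC5) = 1 := tri_r1 _ bZ5 wZ5 hbz5 hwv5

lemma r2_t5 : r2 (triflectionMatrix bC5) = nmat 5 := by
  rw [tri_r2 _ bZ5 wZ5 hbz5 hwv5]
  ext i j
  fin_cases i <;> fin_cases j <;> decide

lemma tri_facts {x : GL (Fin 4) ℂ} (hx : x ∈ triflections) :
    x ∈ G3gp ∧ r1 (x : M4C) = 1 ∧ ∃ k : Fin 6, r2 (x : M4C) = nmat k := by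
  obtain ⟨b, hbmem, hxb⟩ := hx
  rcases hbmem with h | h | h | h | h | h
  · have hb : b = bC0 := h
    rw [hb] at hxb
    exact ⟨by rw [mem_G3gp, hxb]; exact ⟨tri_isE _ bZ0 wZ0 hbz0 hwv0, tri_form _ hsb0 hwdot0⟩,
      by rw [hxb]; exact r1_t0, 0, by rw [hxb]; exact r2_t0⟩
  · have hb : b = bC1 := h
    rw [hb] at hxb
    exact ⟨by rw [mem_G3gp, hxb]; exact ⟨tri_isE _ bZ1 wZ1 hbz1 hwv1, tri_form _ hsb1 hwdot1⟩,
      by rw [hxb]; exact r1_t1, 1, by rw [hxb]; exact r2_t1⟩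
  · have hb : b = bC2 := h
    rw [hb] at hxb
    exact ⟨by rw [mem_G3gp, hxb]; exact ⟨tri_isE _ bZ2 wZ2 hbz2 hwv2, tri_form _ hsb2 hwdot2⟩,
      by rw [hxb]; exact r1_t2, 2, by rw [hxb]; exact r2_t2⟩
  · have hb : b = bC3 := h
    rw [hb] at hxb
    exact ⟨by rw [mem_G3gp, hxb]; exact ⟨tri_isE _ bZ3 wZ3 hbz3 hwv3, tri_form _ hsb3 hwdot3⟩,
      by rw [hxb]; exact r1_t3, 3, by rw [hxb]; exact r2_t3⟩
  · have hb : b = bC4 := h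
    rw [hb] at hxb
    exact ⟨by rw [mem_G3gp, hxb]; exact ⟨tri_isE _ bZ4 wZ4 hbz4 hwv4, tri_form _ hsb4 hwdot4⟩,
      by rw [hxb]; exact r1_t4, 4, by rw [hxb]; exact r2_t4⟩
  · have hb : b = bC5 := h
    rw [hb] at hxb
    exact ⟨by rw [mem_G3gp, hxb]; exact ⟨tri_isE _ bZ5 wZ5 hbz5 hwv5, tri_form _ hsb5 hwdot5⟩,
      by rw [hxb]; exact r1_t5, 5, by rw [hxb]; exact r2_t5⟩

----------------------------------------------------------------
-- PART G : the groups K = G' and H = ⟨G₃[3], -1⟩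
----------------------------------------------------------------

abbrev GL4 := GL (Fin 4) ℂ

noncomputable def Sset : Set GL4 := (G33gp : Set GL4) ∪ triflections
noncomputable def Kgp : Subgroup GL4 := Subgroup.closure Sset
noncomputable def Hgp : Subgroup GL4 := Subgroup.closure ((G33gp : Set GL4) ∪ {-1})

lemma KleG3 : Kgp ≤ G3gp := by
  rw [Kgp, Subgroup.closure_le]
  rintro x (hx | hx)
  · exact (mem_G33gp.mp hx).1
  · exact (tri_facts hx).1

lemma fst1 : ∀ x (hx : x ∈ Kgp), r1 ((x : GL4) : M4C) = 1 := by
  intro x hx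
  induction hx using Subgroup.closure_induction with
  | mem y hy =>
    rcases hy with hy | hy
    · exact ((cong3_iff (mem_G3gp.mp (mem_G33gp.mp hy).1).1).mp (mem_G33gp.mp hy).2).1
    · exact (tri_facts hy).2.1
  | one => rw [Units.val_one, r1_one]
  | mul a b ha hb iha ihb =>
    have hEa := (mem_G3gp.mp (KleG3 ha)).1
    have hEb := (mem_G3gp.mp (KleG3 hb)).1
    rw [Units.val_mul, r1_mul hEa hEb, iha, ihb, one_mul]
  | inv a ha iha =>
    have hEa := (mem_G3gp.mp (KleG3 ha)).1
    have hEai := (mem_G3gp.mp (KleG3 (inv_mem ha))).1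
    have h := r1_mul hEai hEa
    rw [← Units.val_mul, inv_mul_cancel, Units.val_one, r1_one, iha, mul_one] at h
    exact h.symm

lemma r2_inv {a : GL4} (ha : a ∈ Kgp) :
    r2 ((a⁻¹ : GL4) : M4C) = -(r2 ((a : GL4) : M4C)) := by
  have hEa := (mem_G3gp.mp (KleG3 ha)).1
  have hEai := (mem_G3gp.mp (KleG3 (inv_mem ha))).1
  have h := r2_mul hEai hEa
  rw [← Units.val_mul, inv_mul_cancel, Units.val_one, r2_one, fst1 _ (inv_mem ha),
    fst1 _ ha, Matrix.one_mul, Matrix.mul_one] at h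
  exact eq_neg_of_add_eq_zero_right h.symm

lemma r2_mul_mem {a b : GL4} (ha : a ∈ Kgp) (hb : b ∈ Kgp) :
    r2 ((a * b : GL4) : M4C) = r2 ((a : GL4) : M4C) + r2 ((b : GL4) : M4C) := by
  have hEa := (mem_G3gp.mp (KleG3 ha)).1
  have hEb := (mem_G3gp.mp (KleG3 hb)).1
  rw [Units.val_mul, r2_mul hEa hEb, fst1 _ ha, fst1 _ hb, Matrix.one_mul, Matrix.mul_one,
    add_comm]

/-- the reduction homomorphism on `G'` -/
noncomputable def f' : Kgp →* Multiplicative M43 :=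
  MonoidHom.mk' (fun x => Multiplicative.ofAdd (r2 ((x : GL4) : M4C)))
    (by
      intro a b
      show Multiplicative.ofAdd (r2 ((((a * b : Kgp) : GL4)) : M4C))
          = Multiplicative.ofAdd (r2 (((a : GL4)) : M4C))
            * Multiplicative.ofAdd (r2 (((b : GL4)) : M4C))
      rw [show ((a * b : Kgp) : GL4) = ((a : GL4) * (b : GL4)) from rfl]
      rw [r2_mul_mem a.2 b.2, ofAdd_add])

lemma ker_f' : f'.ker = G33gp.subgroupOf Kgp := by
  ext x
  rw [MonoidHom.mem_ker, Subgroup.mem_subgroupOf]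
  constructor
  · intro h
    have h2 : r2 ((↑x : GL4) : M4C) = 0 := by
      have := congrArg Multiplicative.toAdd h
      simpa [f'] using this
    have h1 : r1 ((↑x : GL4) : M4C) = 1 := fst1 _ x.2
    have hG3 : (↑x : GL4) ∈ G3gp := KleG3 x.2
    exact mem_G33gp.mpr ⟨hG3, (cong3_iff (mem_G3gp.mp hG3).1).mpr ⟨h1, h2⟩⟩
  · intro h
    have h2 := ((cong3_iff (mem_G3gp.mp (mem_G33gp.mp h).1).1).mp (mem_G33gp.mp h).2).2
    show Multiplicative.ofAdd (r2 ((↑x : GL4) : M4C)) = 1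
    rw [h2]
    rfl

/-- elements that are plus-or-minus an element of `G₃[3]` -/
noncomputable def H0gp : Subgroup GL4 where
  carrier := {x | x ∈ G33gp ∨ -x ∈ G33gp}
  one_mem' := Or.inl (one_mem _)
  mul_mem' := by
    rintro a b (ha | ha) (hb | hb)
    · exact Or.inl (mul_mem ha hb)
    · right; rw [← mul_neg]; exact mul_mem ha hb
    · right; rw [← neg_mul]; exact mul_mem ha hb
    · left; rw [← neg_mul_neg a b]; exact mul_mem ha hb
  inv_mem' := by
    rintro a (ha | ha)
    · exact Or.inl (inv_mem ha)
    · right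
      have h1 : (-a) * (-a⁻¹) = 1 := by rw [neg_mul_neg, mul_inv_cancel]
      have : -a⁻¹ = (-a)⁻¹ := eq_inv_of_mul_eq_one_left (by rw [neg_mul_neg, inv_mul_cancel])
      rw [this]
      exact inv_mem ha

lemma HleH0 : Hgp ≤ H0gp := by
  rw [Hgp, Subgroup.closure_le]
  rintro x (hx | hx)
  · exact Or.inl hx
  · have : x = -1 := hx
    right
    rw [this, neg_neg]
    exact one_mem _

lemma one_ne_neg_one_M43 : (1 : M43) ≠ (-1 : M43) := by
  intro h
  have := congrFun (congrFun h 0) 0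
  rw [Matrix.one_apply_eq, Matrix.neg_apply, Matrix.one_apply_eq] at this
  exact absurd this (by decide)

lemma HsubK : Hgp.subgroupOf Kgp = G33gp.subgroupOf Kgp := by
  ext x
  rw [Subgroup.mem_subgroupOf, Subgroup.mem_subgroupOf]
  constructor
  · intro hx
    rcases HleH0 hx with h | h
    · exact h
    · exfalso
      have h1 : r1 ((↑x : GL4) : M4C) = 1 := fst1 _ x.2
      have hG3 : (-(↑x : GL4)) ∈ G3gp := (mem_G33gp.mp h).1
      have hEn : IsEisM ((-(↑x : GL4) : GL4) : M4C) := (mem_G3gp.mp hG3).1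
      have hr1n : r1 ((-(↑x : GL4) : GL4) : M4C) = 1 :=
        ((cong3_iff hEn).mp (mem_G33gp.mp h).2).1
      have hv : ((-(↑x : GL4) : GL4) : M4C) = -((↑x : GL4) : M4C) := Units.val_neg _
      rw [hv] at hr1n hEn
      have hcontr : r1 ((↑x : GL4) : M4C) = -1 := by
        calc r1 ((↑x : GL4) : M4C) = r1 (-(-((↑x : GL4) : M4C))) := by rw [neg_neg]
          _ = -(r1 (-((↑x : GL4) : M4C))) := r1_neg hEn
          _ = -1 := by rw [hr1n]
      rw [h1] at hcontr
      exact one_ne_neg_one_M43 hcontr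
  · intro hx
    exact Subgroup.subset_closure (Or.inl hx)

----------------------------------------------------------------
-- PART H : the image and its cardinality
----------------------------------------------------------------

noncomputable def Egp : AddSubgroup M43 := AddSubgroup.closure (Set.range nmat)

lemma range_f'_le : f'.range ≤ AddSubgroup.toSubgroup Egp := by
  rintro y ⟨x, rfl⟩
  obtain ⟨xv, hx⟩ := x
  show r2 ((xv : GL4) : M4C) ∈ Egp
  induction hx using Subgroup.closure_induction with
  | mem y hy =>
    rcases hy with hy | hy
    · rw [((cong3_iff (mem_G3gp.mp (mem_G33gp.mp hy).1).1).mp (mem_G33gp.mp hy).2).2]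
      exact zero_mem _
    · obtain ⟨k, hk⟩ := (tri_facts hy).2.2
      rw [hk]
      exact AddSubgroup.subset_closure ⟨k, rfl⟩
  | one => rw [Units.val_one, r2_one]; exact zero_mem _
  | mul a b ha hb iha ihb =>
    rw [r2_mul_mem ha hb]
    exact add_mem iha ihb
  | inv a ha iha =>
    rw [r2_inv ha]
    exact neg_mem iha

lemma ofAdd_nmat_mem (k : Fin 6) : Multiplicative.ofAdd (nmat k) ∈ f'.range := by
  fin_cases k
  · exact ⟨⟨tGL0, Subgroup.subset_closure (Or.inr tGL0_mem)⟩,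
      by show Multiplicative.ofAdd (r2 _) = _; rw [show ((tGL0 : GL4) : M4C) = triflectionMatrix bC0 from rfl, r2_t0]; rfl⟩
  · exact ⟨⟨tGL1, Subgroup.subset_closure (Or.inr tGL1_mem)⟩,
      by show Multiplicative.ofAdd (r2 _) = _; rw [show ((tGL1 : GL4) : M4C) = triflectionMatrix bC1 from rfl, r2_t1]; rfl⟩
  · exact ⟨⟨tGL2, Subgroup.subset_closure (Or.inr tGL2_mem)⟩,
      by show Multiplicative.ofAdd (r2 _) = _; rw [show ((tGL2 : GL4) : M4C) = triflectionMatrix bC2 from rfl, r2_t2]; rfl⟩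
  · exact ⟨⟨tGL3, Subgroup.subset_closure (Or.inr tGL3_mem)⟩,
      by show Multiplicative.ofAdd (r2 _) = _; rw [show ((tGL3 : GL4) : M4C) = triflectionMatrix bC3 from rfl, r2_t3]; rfl⟩
  · exact ⟨⟨tGL4, Subgroup.subset_closure (Or.inr tGL4_mem)⟩,
      by show Multiplicative.ofAdd (r2 _) = _; rw [show ((tGL4 : GL4) : M4C) = triflectionMatrix bC4 from rfl, r2_t4]; rfl⟩
  · exact ⟨⟨tGL5, Subgroup.subset_closure (Or.inr tGL5_mem)⟩,
      by show Multiplicative.ofAdd (r2 _) = _; rw [show ((tGL5 : GL4) : M4C) = triflectionMatrix bC5 from rfl, r2_t5]; rfl⟩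

lemma range_f'_ge : AddSubgroup.toSubgroup Egp ≤ f'.range := by
  intro y hy
  have hy' : Multiplicative.toAdd y ∈ Egp := hy
  have key : ∀ n, n ∈ Egp → Multiplicative.ofAdd n ∈ f'.range := by
    intro n hn
    induction hn using AddSubgroup.closure_induction with
    | mem m hm =>
      obtain ⟨k, rfl⟩ := hm
      exact ofAdd_nmat_mem k
    | zero => rw [ofAdd_zero]; exact one_mem _
    | add a b ha hb iha ihb => rw [ofAdd_add]; exact mul_mem iha ihb
    | neg a ha iha => rw [ofAdd_neg]; exact inv_mem iha
  exact key _ hy'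

lemma range_f' : f'.range = AddSubgroup.toSubgroup Egp :=
  le_antisymm range_f'_le range_f'_ge

def Mgen : Fin 5 → M43 := ![nmat 0, nmat 1, nmat 2, nmat 3, nmat 4]

def gmap : (Fin 5 → ZMod 3) →+ M43 where
  toFun := fun c => ∑ k, c k • Mgen k
  map_zero' := by simp
  map_add' := by
    intro a b
    simp [add_smul, Finset.sum_add_distrib]

set_option maxRecDepth 10000 in
lemma gmap_inj : Function.Injective gmap := by
  rw [injective_iff_map_eq_zero]
  have : ∀ c : Fin 5 → ZMod 3, gmap c = 0 → c = 0 := by decide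
  exact this

set_option maxRecDepth 10000 in
lemma Egp_eq_range : Egp = gmap.range := by
  apply le_antisymm
  · rw [Egp, AddSubgroup.closure_le]
    rintro n ⟨k, rfl⟩
    fin_cases k
    · exact ⟨![1,0,0,0,0], by decide⟩
    · exact ⟨![0,1,0,0,0], by decide⟩
    · exact ⟨![0,0,1,0,0], by decide⟩
    · exact ⟨![0,0,0,1,0], by decide⟩
    · exact ⟨![0,0,0,0,1], by decide⟩
    · exact ⟨![1,2,1,1,2], by decide⟩
  · rintro n ⟨c, rfl⟩
    have hM : ∀ k : Fin 5, Mgen k ∈ Egp := by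
      intro k
      apply AddSubgroup.subset_closure
      fin_cases k
      exacts [⟨0, rfl⟩, ⟨1, rfl⟩, ⟨2, rfl⟩, ⟨3, rfl⟩, ⟨4, rfl⟩]
    show (∑ k, c k • Mgen k) ∈ Egp
    refine AddSubgroup.sum_mem _ fun k _ => ?_
    have h1 : (((c k).val : ℕ) : ZMod 3) = c k := ZMod.natCast_rightInverse (c k)
    have h2 : (((c k).val : ℕ) : ZMod 3) • Mgen k = (c k).val • Mgen k :=
      Nat.cast_smul_eq_nsmul _ _ _
    rw [← h1, h2]
    exact nsmul_mem (hM k) _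

lemma card_Egp : Nat.card Egp = 243 := by
  rw [Egp_eq_range]
  have h1 : Nat.card gmap.range = Nat.card (Set.range ⇑gmap) :=
    Nat.card_congr (Equiv.setCongr (AddMonoidHom.coe_range gmap))
  rw [h1, Nat.card_range_of_injective gmap_inj]
  simp [Nat.card_eq_fintype_card]

theorem final_relindex : Hgp.relIndex Kgp = 243 := by
  have h1 : Hgp.subgroupOf Kgp = f'.ker := HsubK.trans ker_f'.symm
  rw [Subgroup.relIndex, h1, Subgroup.index_ker, range_f']
  have h2 : Nat.card (AddSubgroup.toSubgroup Egp) = Nat.card Egp :=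
    Nat.card_congr (Equiv.subtypeEquiv Multiplicative.toAdd (fun _ => Iff.rfl))
  rw [h2, card_Egp]

/-- With `G₃`, `G₃[3]` and `G'` as before, the subgroup of `G'`
generated by `G₃[3]` together with `−1` has index `243` in `G'` (the covering degree
of `X(G₃[3]) → X(G')`). -/
theorem index_G33_neg_one_in_G' :
    ∃ G3 G33 : Subgroup (GL (Fin 4) ℂ),
      (∀ γ : GL (Fin 4) ℂ, γ ∈ G3 ↔
        ((∀ i j, IsEisenstein ((γ : Matrix (Fin 4) (Fin 4) ℂ) i j)) ∧
          (γ : Matrix (Fin 4) (Fin 4) ℂ)ᴴ * J4 * (γ : Matrix (Fin 4) (Fin 4) ℂ) = J4)) ∧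
      (∀ γ : GL (Fin 4) ℂ, γ ∈ G33 ↔ (γ ∈ G3 ∧
        ∀ i j, ∃ a b : ℤ,
          ((γ : Matrix (Fin 4) (Fin 4) ℂ) - 1) i j = 3 * ((a : ℂ) + (b : ℂ) * ω))) ∧
      (Subgroup.closure ((G33 : Set (GL (Fin 4) ℂ)) ∪ {-1})).relIndex
          (Subgroup.closure ((G33 : Set (GL (Fin 4) ℂ)) ∪ triflections)) = 243 := by
  refine ⟨G3gp, G33gp, fun γ => Iff.rfl, fun γ => Iff.rfl, ?_⟩
  exact final_relindex
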